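/- Let Π be a set, k : Π × Π → ℝ, λ > 0, t ∈ ℕ, and points π₁, …, π_{t+1} ∈ Π and π ∈ Π such that the (t+2)×(t+2) Gram matrix of k at (π₁, …, π_{t+1}, π) is symmetric and positive semidefinite. For s ∈ {t, t+1}, let K_s be the s×s matrix with entries k(π_i,π_j) for i,j ≤ s and let k_s(π) := (k(π,π₁),…,k(π,π_s))ᵀ. Then the posterior variance is nonincreasing in the number of observations: k(π,π) − k_{t+1}(π)ᵀ(K_{t+1} + λI)^{-1}k_{t+1}(π) ≤ k(π,π) − k_t(π)ᵀ(K_t + λI)^{-1}k_t(π). -/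

import Mathlib

open Matrix

private lemma var_ineq {m : Type*} [Fintype m] [DecidableEq m]
    (M : Matrix m m ℝ) (hM : M.PosDef) (x y : m → ℝ) :
    2 * (x ⬝ᵥ y) - y ⬝ᵥ (M *ᵥ y) ≤ x ⬝ᵥ (M⁻¹ *ᵥ x) := by
  have hinv : M * M⁻¹ = 1 := Matrix.mul_nonsing_inv M hM.det_pos.ne'.isUnit
  set w : m → ℝ := M⁻¹ *ᵥ x with hw
  have hMw : M *ᵥ w = x := by
    rw [hw, Matrix.mulVec_mulVec, hinv, Matrix.one_mulVec]
  have hsym : Mᵀ = M := hM.isHermitian.eq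
  have h0 : 0 ≤ (y - w) ⬝ᵥ (M *ᵥ (y - w)) := by
    have := hM.posSemidef.dotProduct_mulVec_nonneg (y - w)
    simpa using this
  have e1 : y ⬝ᵥ (M *ᵥ w) = x ⬝ᵥ y := by rw [hMw, dotProduct_comm]
  have e2 : w ⬝ᵥ (M *ᵥ y) = x ⬝ᵥ y := by
    rw [Matrix.dotProduct_mulVec, ← Matrix.mulVec_transpose, hsym, hMw]
  have e3 : w ⬝ᵥ (M *ᵥ w) = x ⬝ᵥ w := by rw [hMw, dotProduct_comm]
  rw [Matrix.mulVec_sub, dotProduct_sub, sub_dotProduct,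
    sub_dotProduct] at h0
  linarith

theorem posterior_variance_antitone
    {α : Type*} (k : α → α → ℝ) (lam : ℝ) (hlam : 0 < lam)
    (t : ℕ) (p : Fin (t + 1) → α) (π : α)
    (hGram : (Matrix.of fun i j : Fin (t + 2) =>
      k ((Fin.snoc p π : Fin (t + 2) → α) i)
        ((Fin.snoc p π : Fin (t + 2) → α) j)).PosSemidef) :
    k π π - (fun i : Fin (t + 1) => k π (p i)) ⬝ᵥ
        (((Matrix.of fun i j : Fin (t + 1) => k (p i) (p j)) + lam • 1)⁻¹ *ᵥ
          fun i => k π (p i)) ≤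
      k π π - (fun i : Fin t => k π (p i.castSucc)) ⬝ᵥ
        (((Matrix.of fun i j : Fin t => k (p i.castSucc) (p j.castSucc)) + lam • 1)⁻¹ *ᵥ
          fun i => k π (p i.castSucc)) := by
  set M : Matrix (Fin (t+1)) (Fin (t+1)) ℝ :=
    (Matrix.of fun i j : Fin (t + 1) => k (p i) (p j)) + lam • 1 with hMdef
  set A : Matrix (Fin t) (Fin t) ℝ :=
    (Matrix.of fun i j : Fin t => k (p i.castSucc) (p j.castSucc)) + lam • 1 with hAdef
  have hlamPD : ∀ (n : Type) [Fintype n] [DecidableEq n],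
      (lam • (1 : Matrix n n ℝ)).PosDef := by
    intro n _ _
    rw [Matrix.smul_one_eq_diagonal]
    exact Matrix.PosDef.diagonal (fun _ => hlam)
  have hK1 : (Matrix.of fun i j : Fin (t + 1) => k (p i) (p j)).PosSemidef := by
    have heq : (Matrix.of fun i j : Fin (t + 1) => k (p i) (p j)) =
        (Matrix.of fun i j : Fin (t + 2) =>
          k ((Fin.snoc p π : Fin (t + 2) → α) i) ((Fin.snoc p π : Fin (t + 2) → α) j)).submatrix
          Fin.castSucc Fin.castSucc := by
      ext i j
      simp [Fin.snoc_castSucc]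
    rw [heq]
    exact hGram.submatrix _
  have hK0 : (Matrix.of fun i j : Fin t => k (p i.castSucc) (p j.castSucc)).PosSemidef := by
    have heq : (Matrix.of fun i j : Fin t => k (p i.castSucc) (p j.castSucc)) =
        (Matrix.of fun i j : Fin (t + 2) =>
          k ((Fin.snoc p π : Fin (t + 2) → α) i) ((Fin.snoc p π : Fin (t + 2) → α) j)).submatrix
          (fun i : Fin t => i.castSucc.castSucc) (fun i : Fin t => i.castSucc.castSucc) := by
      ext i j
      simp [Fin.snoc_castSucc]
    rw [heq]
    exact hGram.submatrix _
  have hMpd : M.PosDef := Matrix.PosDef.posSemidef_add hK1 (hlamPD _)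
  have hApd : A.PosDef := Matrix.PosDef.posSemidef_add hK0 (hlamPD _)
  set u : Fin t → ℝ := fun i => k π (p i.castSucc) with hu
  set v : Fin (t+1) → ℝ := fun i => k π (p i) with hv
  have hAinv : A * A⁻¹ = 1 := Matrix.mul_nonsing_inv A hApd.det_pos.ne'.isUnit
  set y : Fin t → ℝ := A⁻¹ *ᵥ u with hy
  have hAy : A *ᵥ y = u := by rw [hy, Matrix.mulVec_mulVec, hAinv, Matrix.one_mulVec]
  set yy : Fin (t+1) → ℝ := Fin.snoc y 0 with hyy
  have key : u ⬝ᵥ (A⁻¹ *ᵥ u) ≤ v ⬝ᵥ (M⁻¹ *ᵥ v) := by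
    have h1 : v ⬝ᵥ yy = u ⬝ᵥ y := by
      rw [dotProduct, Fin.sum_univ_castSucc]
      simp [hyy, Fin.snoc_castSucc, Fin.snoc_last, dotProduct, hv, hu]
    have hMAcs : ∀ i j : Fin t, M i.castSucc j.castSucc = A i j := by
      intro i j
      simp [hMdef, hAdef, Matrix.add_apply, Matrix.smul_apply, Matrix.one_apply,
        Fin.castSucc_inj]
    have h2 : yy ⬝ᵥ (M *ᵥ yy) = y ⬝ᵥ (A *ᵥ y) := by
      have hMv : ∀ i : Fin (t+1), (M *ᵥ yy) i = ∑ j : Fin t, M i j.castSucc * y j := by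
        intro i
        rw [Matrix.mulVec, dotProduct, Fin.sum_univ_castSucc]
        simp [hyy, Fin.snoc_castSucc, Fin.snoc_last]
      rw [dotProduct, Fin.sum_univ_castSucc]
      have hl : yy (Fin.last t) = 0 := by simp [hyy]
      rw [hl, zero_mul, add_zero, dotProduct]
      refine Finset.sum_congr rfl fun i _ => ?_
      have hc : yy i.castSucc = y i := by simp [hyy]
      rw [hMv, hc, Matrix.mulVec, dotProduct]
      congr 1
      exact Finset.sum_congr rfl fun j _ => by rw [hMAcs]
    calc u ⬝ᵥ (A⁻¹ *ᵥ u) = 2 * (v ⬝ᵥ yy) - yy ⬝ᵥ (M *ᵥ yy) := by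
          rw [h1, h2, hAy, dotProduct_comm y u]
          rw [← hy]
          ring
      _ ≤ v ⬝ᵥ (M⁻¹ *ᵥ v) := var_ineq M hMpd v yy
  exact sub_le_sub_left key _
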